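/- Let λ ≠ 0 be a real number and let (T_s)_{s∈ℝ} and (g_t)_{t∈ℝ} be jointly measurable measure-preserving flows on a standard Borel probability space (X, μ) satisfying the dilation relation g_t ∘ T_s = T_{e^{λt}s} ∘ g_t for all s, t ∈ ℝ. If f ∈ L²(X, μ) satisfies f ∘ g_t = f μ-almost everywhere for every t ∈ ℝ, then f ∘ T_s = f μ-almost everywhere for every s ∈ ℝ. -/

import Mathlib

open MeasureTheory Filter Set

theorem stmt3 {X : Type*} [MeasurableSpace X] [StandardBorelSpace X]
    (μ : Measure X) [IsProbabilityMeasure μ]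
    (lam : ℝ) (hlam : lam ≠ 0)
    (T g : ℝ → X → X)
    (hTjm : Measurable (fun p : ℝ × X => T p.1 p.2))
    (hgjm : Measurable (fun p : ℝ × X => g p.1 p.2))
    (hT0 : T 0 = id) (hTadd : ∀ s s' : ℝ, T (s + s') = T s ∘ T s')
    (hg0 : g 0 = id) (hgadd : ∀ t t' : ℝ, g (t + t') = g t ∘ g t')
    (hTmp : ∀ s : ℝ, MeasurePreserving (T s) μ μ)
    (hgmp : ∀ t : ℝ, MeasurePreserving (g t) μ μ)
    (hdil : ∀ t s : ℝ, g t ∘ T s = T (Real.exp (lam * t) * s) ∘ g t)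
    (f : X → ℝ) (hf : MemLp f 2 μ)
    (hfg : ∀ t : ℝ, (fun x => f (g t x)) =ᵐ[μ] f) :
    ∀ s : ℝ, (fun x => f (T s x)) =ᵐ[μ] f := by
  haveI : Fact ((1 : ENNReal) ≤ 2) := ⟨one_le_two⟩
  haveI : Fact ((2 : ENNReal) ≠ ⊤) := ⟨by norm_num⟩
  -- membership in L² of all the composites
  have hfT : ∀ s : ℝ, MemLp (fun x => f (T s x)) 2 μ := fun s =>
    hf.comp_measurePreserving (hTmp s)
  -- the L² elements
  set F : ℝ → Lp ℝ 2 μ := fun s => (hfT s).toLp _ with hF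
  have hcoe : ∀ s : ℝ, (F s : X → ℝ) =ᵐ[μ] fun x => f (T s x) := fun s =>
    (hfT s).coeFn_toLp
  set φ : ℝ → ENNReal := fun s => eLpNorm (fun x => f (T s x) - f x) 2 μ with hφ
  -- Lemma A : shift invariance
  have lemA : ∀ s s' : ℝ,
      eLpNorm (fun x => f (T s x) - f (T s' x)) 2 μ = φ (s - s') := by
    intro s s'
    have hkey : (fun x => f (T (s - s') x) - f x) ∘ (T s')
        = fun x => f (T s x) - f (T s' x) := by
      funext x
      have h1 : T s x = T (s - s') (T s' x) := by
        have := congrFun (hTadd (s - s') s') x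
        simpa using this
      simp [Function.comp, h1]
    rw [← hkey]
    exact eLpNorm_comp_measurePreserving ((hfT (s - s')).sub hf).1 (hTmp s')
  -- Lemma B : dilation invariance
  have lemB : ∀ t s : ℝ, φ (Real.exp (lam * t) * s) = φ s := by
    intro t s
    have h1 : φ (Real.exp (lam * t) * s)
        = eLpNorm ((fun x => f (T (Real.exp (lam * t) * s) x) - f x) ∘ g t) 2 μ :=
      (eLpNorm_comp_measurePreserving ((hfT _).sub hf).1 (hgmp t)).symm
    have h2 : ((fun x => f (T (Real.exp (lam * t) * s) x) - f x) ∘ g t)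
        = fun x => f (g t (T s x)) - f (g t x) := by
      funext x
      have := congrFun (hdil t s) x
      simp only [Function.comp] at this ⊢
      rw [← this]
    have h3 : (fun x => f (g t (T s x)) - f (g t x))
        =ᵐ[μ] fun x => f (T s x) - f x := by
      have ha : (fun x => f (g t (T s x))) =ᵐ[μ] fun x => f (T s x) := by
        have := (hTmp s).quasiMeasurePreserving.ae_eq_comp (g := fun y => f (g t y))
          (g' := f) (hfg t)
        exact this
      filter_upwards [ha, hfg t] with x h1 h2
      rw [h1, h2]
    rw [h1, h2, eLpNorm_congr_ae h3]
  -- Lemma C : symmetry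
  have lemC : ∀ s : ℝ, φ (-s) = φ s := by
    intro s
    have := lemA 0 s
    have h0 : (fun x => f (T 0 x) - f (T s x)) = -(fun x => f (T s x) - f x) := by
      funext x; simp [hT0]
    rw [h0, eLpNorm_neg] at this
    simpa using this.symm
  -- φ is constant on nonzero reals
  have hconst : ∀ s : ℝ, s ≠ 0 → φ s = φ 1 := by
    have hpos : ∀ s : ℝ, 0 < s → φ s = φ 1 := by
      intro s hs
      have h : Real.exp (lam * (Real.log s / lam)) * 1 = s := by
        rw [mul_div_cancel₀ _ hlam, Real.exp_log hs, mul_one]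
      have := lemB (Real.log s / lam) 1
      rwa [h] at this
    intro s hs
    rcases lt_or_gt_of_ne hs with h | h
    · rw [← lemC s, hpos (-s) (by linarith)]
    · exact hpos s h
  -- distance computation
  have hdist : ∀ s s' : ℝ, s ≠ s' → dist (F s) (F s') = (φ 1).toReal := by
    intro s s' hss
    rw [MeasureTheory.Lp.dist_def]
    have h1 : (⇑(F s) - ⇑(F s')) =ᵐ[μ] fun x => f (T s x) - f (T s' x) := by
      filter_upwards [hcoe s, hcoe s'] with x h1 h2
      simp [h1, h2]
    rw [eLpNorm_congr_ae h1, lemA s s', hconst _ (sub_ne_zero_of_ne hss)]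
  -- the constant distance must be 0, by separability of L²
  have hφ10 : (φ 1).toReal = 0 := by
    by_contra hne
    have hr : 0 < (φ 1).toReal := by
      have := hdist 1 0 one_ne_zero
      have := dist_nonneg (x := F 1) (y := F 0)
      rw [hdist 1 0 one_ne_zero] at this
      exact lt_of_le_of_ne this (Ne.symm hne)
    set r := (φ 1).toReal
    obtain ⟨D, hDc, hDd⟩ := TopologicalSpace.exists_countable_dense (Lp ℝ 2 μ)
    have hchoice : ∀ s : ℝ, ∃ d ∈ D, dist (F s) d < r / 2 := fun s =>
      hDd.exists_dist_lt (F s) (by linarith)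
    choose u hu hud using hchoice
    have huinj : Function.Injective u := by
      intro s s' h
      by_contra hss
      have h1 : dist (F s) (F s') ≤ dist (F s) (u s) + dist (u s') (F s') := by
        rw [h]; exact dist_triangle _ _ _
      have h2 : dist (u s') (F s') = dist (F s') (u s') := dist_comm _ _
      rw [hdist s s' hss, h2] at h1
      have := hud s
      have := hud s'
      linarith
    haveI : Countable D := hDc.to_subtype
    have : Countable ℝ := by
      have hinj : Function.Injective (fun s : ℝ => (⟨u s, hu s⟩ : D)) := by
        intro s s' h
        exact huinj (congrArg Subtype.val h)
      exact Function.Injective.countable hinj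
    exact not_countable this
  -- conclude
  intro s
  rcases eq_or_ne s 0 with rfl | hs
  · simp [hT0]
  · have h0 : dist (F s) (F 0) = 0 := by rw [hdist s 0 hs, hφ10]
    have hFs : F s = F 0 := by
      rw [dist_eq_zero] at h0
      exact h0
    have : (fun x => f (T s x)) =ᵐ[μ] fun x => f (T 0 x) :=
      ((hcoe s).symm.trans (hFs ▸ hcoe 0))
    simpa [hT0] using this
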